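/- Let E be a finite-dimensional real inner product space, let 0 < m ≤ M, and let G : E → ℝ be three times continuously differentiable such that D²G(F)[Z,Z] ≥ m‖Z‖² for all F, Z ∈ E and ‖D³G(F)‖ ≤ M for all F ∈ E (operator norm of the third derivative as a trilinear map). Then for every A ∈ E, the function F ↦ DG(F)(A) + (M/m)·‖A‖·G(F) is convex on E. -/

import Mathlib

open Set

/-- A `C²` function on a real normed space whose second derivative is
positive semidefinite everywhere is convex. -/
lemma convexOn_univ_of_iteratedFDeriv_two_nonneg
    {E : Type*} [NormedAddCommGroup E] [NormedSpace ℝ E]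
    (f : E → ℝ) (hf : ContDiff ℝ 2 f)
    (hpos : ∀ x v : E, 0 ≤ iteratedFDeriv ℝ 2 f x ![v, v]) :
    ConvexOn ℝ Set.univ f := by
  refine ⟨convex_univ, fun x _ y _ a b ha hb hab => ?_⟩
  set v : E := y - x with hv
  set L : ℝ → E := fun t => x + t • v with hL
  have hLd : ∀ t : ℝ, HasDerivAt L v t := fun t => by
    simpa [hL] using ((hasDerivAt_id t).smul_const v).const_add x
  set g : ℝ → ℝ := fun t => f (L t) with hg
  have hf1 : ContDiff ℝ 1 (fderiv ℝ f) := hf.fderiv_right (le_refl _)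
  have hfd : Differentiable ℝ f := hf.differentiable (by norm_num)
  -- first derivative of g
  have hg' : ∀ t : ℝ, HasDerivAt g (fderiv ℝ f (L t) v) t := fun t =>
    (hfd (L t)).hasFDerivAt.comp_hasDerivAt t (hLd t)
  have hgdiff : Differentiable ℝ g := fun t => (hg' t).differentiableAt
  have hderivg : deriv g = fun t => fderiv ℝ f (L t) v := by
    funext t; exact (hg' t).deriv
  -- second derivative of g
  have hq : ∀ z : E, HasFDerivAt (fun w : E => fderiv ℝ f w v)
      ((ContinuousLinearMap.apply ℝ ℝ v).comp (fderiv ℝ (fderiv ℝ f) z)) z := by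
    intro z
    exact (ContinuousLinearMap.apply ℝ ℝ v).hasFDerivAt.comp z
      ((hf1.differentiable (by norm_num)) z).hasFDerivAt
  have hg'' : ∀ t : ℝ, HasDerivAt (fun s => fderiv ℝ f (L s) v)
      (fderiv ℝ (fderiv ℝ f) (L t) v v) t := fun t =>
    (hq (L t)).comp_hasDerivAt t (hLd t)
  have hmono : Monotone (deriv g) := by
    rw [hderivg]
    apply monotone_of_deriv_nonneg
    · exact fun t => (hg'' t).differentiableAt
    · intro t
      rw [(hg'' t).deriv]
      have := hpos (L t) v
      rwa [iteratedFDeriv_two_apply] at this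
      -- `![v,v] 0 = v`, `![v,v] 1 = v` definitionally
  have hgconv : ConvexOn ℝ Set.univ g := hmono.convexOn_univ_of_deriv hgdiff
  have key := hgconv.2 (mem_univ (0 : ℝ)) (mem_univ (1 : ℝ)) ha hb hab
  simpa [hg, hL, hv, Convex.combo_eq_smul_sub_add hab, add_comm] using key

/-- **Convexity property (4.2) from Hypothesis 4.1.**
Let `E` be a finite-dimensional real inner product space, `0 < m ≤ M`, and let
`G : E → ℝ` be `C³` with `D²G(F)[Z,Z] ≥ m‖Z‖²` for all `F, Z` and
`‖D³G(F)‖ ≤ M` for all `F`. Then for every `A ∈ E` the function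
`F ↦ DG(F)(A) + (M/m)·‖A‖·G(F)` is convex. -/
theorem convexity_from_derivative_bounds
    (E : Type*) [NormedAddCommGroup E] [InnerProductSpace ℝ E]
    [FiniteDimensional ℝ E]
    (m M : ℝ) (hm : 0 < m) (hmM : m ≤ M)
    (G : E → ℝ) (hG : ContDiff ℝ 3 G)
    (h2 : ∀ F Z : E, m * ‖Z‖ ^ 2 ≤ iteratedFDeriv ℝ 2 G F ![Z, Z])
    (h3 : ∀ F : E, ‖iteratedFDeriv ℝ 3 G F‖ ≤ M)
    (A : E) :
    ConvexOn ℝ Set.univ (fun F : E => fderiv ℝ G F A + (M / m) * ‖A‖ * G F) := by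
  set c : ℝ := M / m * ‖A‖ with hc
  have hG1 : ContDiff ℝ 2 (fderiv ℝ G) := hG.fderiv_right (by norm_num)
  have hGA : ContDiff ℝ 2 (fun F : E => fderiv ℝ G F A) :=
    (ContinuousLinearMap.apply ℝ ℝ A).contDiff.comp hG1
  have hG2 : ContDiff ℝ 2 G := hG.of_le (by norm_num)
  have hcG : ContDiff ℝ 2 (fun F : E => c * G F) := hG2.const_smul c
  apply convexOn_univ_of_iteratedFDeriv_two_nonneg _ (hGA.add hcG)
  intro x v
  have hsplit : iteratedFDeriv ℝ 2 (fun F : E => fderiv ℝ G F A + c * G F) x ![v, v]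
      = iteratedFDeriv ℝ 2 (fun F : E => fderiv ℝ G F A) x ![v, v]
        + c * iteratedFDeriv ℝ 2 G x ![v, v] := by
    have h1 : (fun F : E => fderiv ℝ G F A + c * G F)
        = (fun F : E => fderiv ℝ G F A) + (fun F : E => c • G F) := rfl
    rw [h1, iteratedFDeriv_add_apply hGA.contDiffAt (hG2.const_smul c).contDiffAt]
    have h2' : iteratedFDeriv ℝ 2 (fun y : E => c • G y) x = c • iteratedFDeriv ℝ 2 G x :=
      iteratedFDeriv_const_smul_apply' hG2.contDiffAt
    show (iteratedFDeriv ℝ 2 (fun F : E => (fderiv ℝ G F) A) x) ![v, v]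
        + (iteratedFDeriv ℝ 2 (fun y : E => c • G y) x) ![v, v] = _
    rw [h2']
    rfl
  have hcomp : iteratedFDeriv ℝ 2 (fun F : E => fderiv ℝ G F A) x ![v, v]
      = (iteratedFDeriv ℝ 2 (fderiv ℝ G) x ![v, v]) A := by
    have := (ContinuousLinearMap.apply ℝ ℝ A).iteratedFDeriv_comp_left (hG1.contDiffAt (x := x)) (i := 2) (by norm_num)
    have h2' : (fun F : E => fderiv ℝ G F A)
        = (⇑(ContinuousLinearMap.apply ℝ ℝ A)) ∘ (fderiv ℝ G) := rfl
    rw [h2', this]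
    rfl
  -- bound the third derivative term
  have hb1 : |(iteratedFDeriv ℝ 2 (fderiv ℝ G) x ![v, v]) A| ≤ M * ‖v‖ ^ 2 * ‖A‖ := by
    have e1 : ‖(iteratedFDeriv ℝ 2 (fderiv ℝ G) x ![v, v]) A‖
        ≤ ‖iteratedFDeriv ℝ 2 (fderiv ℝ G) x ![v, v]‖ * ‖A‖ :=
      (iteratedFDeriv ℝ 2 (fderiv ℝ G) x ![v, v]).le_opNorm A
    have e2 : ‖iteratedFDeriv ℝ 2 (fderiv ℝ G) x ![v, v]‖
        ≤ ‖iteratedFDeriv ℝ 2 (fderiv ℝ G) x‖ * (‖v‖ * ‖v‖) := by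
      have := (iteratedFDeriv ℝ 2 (fderiv ℝ G) x).le_opNorm ![v, v]
      simpa [Fin.prod_univ_two, mul_assoc] using this
    have e3 : ‖iteratedFDeriv ℝ 2 (fderiv ℝ G) x‖ ≤ M := by
      rw [norm_iteratedFDeriv_fderiv]; exact h3 x
    calc |(iteratedFDeriv ℝ 2 (fderiv ℝ G) x ![v, v]) A|
        ≤ ‖iteratedFDeriv ℝ 2 (fderiv ℝ G) x ![v, v]‖ * ‖A‖ := e1
      _ ≤ (‖iteratedFDeriv ℝ 2 (fderiv ℝ G) x‖ * (‖v‖ * ‖v‖)) * ‖A‖ := by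
          apply mul_le_mul_of_nonneg_right e2 (norm_nonneg A)
      _ ≤ (M * (‖v‖ * ‖v‖)) * ‖A‖ := by
          apply mul_le_mul_of_nonneg_right _ (norm_nonneg A)
          exact mul_le_mul_of_nonneg_right e3 (by positivity)
      _ = M * ‖v‖ ^ 2 * ‖A‖ := by ring
  -- bound the convexity term
  have hb2 : M * ‖v‖ ^ 2 * ‖A‖ ≤ c * iteratedFDeriv ℝ 2 G x ![v, v] := by
    have hM : 0 < M := hm.trans_le hmM
    have hcnn : 0 ≤ c := by positivity
    have := mul_le_mul_of_nonneg_left (h2 x v) hcnn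
    calc M * ‖v‖ ^ 2 * ‖A‖ = c * (m * ‖v‖ ^ 2) := by
          rw [hc, div_mul_eq_mul_div, div_mul_eq_mul_div, eq_div_iff hm.ne']; ring
      _ ≤ c * iteratedFDeriv ℝ 2 G x ![v, v] := this
  rw [hsplit, hcomp]
  have := abs_le.mp hb1
  linarith [this.1]
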